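/- Let p ∈ ℚ[t] be an irreducible polynomial, let w ∈ ℂ be a root of p, let r be a positive integer, and let q ∈ ℚ[t] be an irreducible factor of p(t^r). Then there exists z ∈ ℂ such that q(z) = 0 and z^r = w. -/

import Mathlib

open Polynomial

set_option synthInstance.maxHeartbeats 1000000
set_option maxHeartbeats 1000000

/-- If `p ∈ ℚ[t]` is irreducible, `w ∈ ℂ` is a root of `p`, `r` is a
positive integer and `q` is an irreducible factor of `p(t^r)`, then `q` has a root `z ∈ ℂ`
with `z^r = w`. -/
theorem exists_root_of_irreducible_factor_of_comp_pow
    (p : ℚ[X]) (hp : Irreducible p) (w : ℂ) (hw : aeval w p = 0)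
    (r : ℕ) (hr : 0 < r) (q : ℚ[X]) (hq : Irreducible q) (hqd : q ∣ p.comp (X ^ r)) :
    ∃ z : ℂ, aeval z q = 0 ∧ z ^ r = w := by
  haveI : Fact (Irreducible p) := ⟨hp⟩
  haveI : Fact (Irreducible q) := ⟨hq⟩
  let A := AdjoinRoot q
  let B := AdjoinRoot p
  let α : A := AdjoinRoot.root q
  have hαq : aeval α q = 0 := by exact (AdjoinRoot.aeval_eq q).trans AdjoinRoot.mk_self
  have hcomp : aeval α (p.comp (X ^ r)) = 0 := by
    obtain ⟨c, hc⟩ := hqd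
    rw [hc, map_mul, show aeval α q = 0 from hαq, zero_mul]
  have h1 : aeval (α ^ r) p = 0 := by
    rwa [aeval_comp, map_pow, aeval_X] at hcomp
  let φ : B →ₐ[ℚ] A := AdjoinRoot.liftAlgHom p (Algebra.ofId ℚ A) (α ^ r) h1
  let ψ : B →ₐ[ℚ] ℂ := AdjoinRoot.liftAlgHom p (Algebra.ofId ℚ ℂ) w hw
  letI : Algebra B A := φ.toRingHom.toAlgebra
  letI : Algebra B ℂ := ψ.toRingHom.toAlgebra
  haveI : IsScalarTower ℚ B A := IsScalarTower.of_algebraMap_eq fun x => (φ.commutes x).symm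
  haveI : IsScalarTower ℚ B ℂ := IsScalarTower.of_algebraMap_eq fun x => (ψ.commutes x).symm
  haveI : FiniteDimensional ℚ A := (AdjoinRoot.powerBasis hq.ne_zero).finite
  haveI : Algebra.IsAlgebraic ℚ A := Algebra.IsAlgebraic.of_finite ℚ A
  haveI : Algebra.IsAlgebraic B A := Algebra.IsAlgebraic.tower_top (K := ℚ) B
  let σ : A →ₐ[B] ℂ := IsAlgClosed.lift
  let τ : A →ₐ[ℚ] ℂ := σ.restrictScalars ℚ
  refine ⟨τ α, ?_, ?_⟩
  · rw [aeval_algHom_apply, hαq, map_zero]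
  · have hroot : φ (AdjoinRoot.root p) = α ^ r := AdjoinRoot.liftAlgHom_root p _ _ h1
    have : τ (α ^ r) = ψ (AdjoinRoot.root p) := by
      rw [← hroot]
      have : φ (AdjoinRoot.root p) = algebraMap B A (AdjoinRoot.root p) := rfl
      rw [this]
      show σ (algebraMap B A (AdjoinRoot.root p)) = ψ (AdjoinRoot.root p)
      rw [σ.commutes]
      rfl
    rw [map_pow] at this
    rw [this]; exact AdjoinRoot.liftAlgHom_root p _ _ hw
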